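/- Let C = (C_0, C_1, ..., C_k) be a tuple of real n×n matrices. If C has the column W-property, then C has the column ND-W property. -/

import Mathlib

open Matrix Finset

/-- `R` is a column representative matrix of the tuple `C = (C 0, ..., C k)`:
each column of `R` is the corresponding column of some `C i`. -/
def IsColRep {n k : ℕ} (C : Fin (k+1) → Matrix (Fin n) (Fin n) ℝ)
    (R : Matrix (Fin n) (Fin n) ℝ) : Prop :=
  ∀ j : Fin n, ∃ i : Fin (k+1), ∀ r : Fin n, R r j = C i r j

/-- The column `W`-property: all column representative matrices have determinants
that are all positive or all negative. -/
def HasColumnW {n k : ℕ} (C : Fin (k+1) → Matrix (Fin n) (Fin n) ℝ) : Prop :=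
  (∀ R, IsColRep C R → 0 < R.det) ∨ (∀ R, IsColRep C R → R.det < 0)

/-- The column `W₀`-property: determinants of all column representative matrices are
all nonnegative with at least one positive, or all nonpositive with at least one negative. -/
def HasColumnW0 {n k : ℕ} (C : Fin (k+1) → Matrix (Fin n) (Fin n) ℝ) : Prop :=
  ((∀ R, IsColRep C R → 0 ≤ R.det) ∧ (∃ R, IsColRep C R ∧ 0 < R.det)) ∨
  ((∀ R, IsColRep C R → R.det ≤ 0) ∧ (∃ R, IsColRep C R ∧ R.det < 0))

/-- The column nondegenerate-`W` (column ND-`W`) property. -/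
def HasColumnNDW {n k : ℕ} (C : Fin (k+1) → Matrix (Fin n) (Fin n) ℝ) : Prop :=
  ∀ x : Fin (k+1) → Fin n → ℝ,
    C 0 *ᵥ x 0 = ∑ i : Fin k, C i.succ *ᵥ x i.succ →
    (∀ i j : Fin (k+1), i < j → x i * x j = 0) →
    ∀ i, x i = 0

/-- The column sufficient-`W` (cS-`W`) property. -/
def HasCSW {n k : ℕ} (C : Fin (k+1) → Matrix (Fin n) (Fin n) ℝ) : Prop :=
  ∀ x : Fin (k+1) → Fin n → ℝ,
    C 0 *ᵥ x 0 = ∑ i : Fin k, C i.succ *ᵥ x i.succ →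
    (∀ i : Fin k, x 0 * x i.succ ≤ 0) →
    (∀ i j : Fin k, i < j → 0 ≤ x i.succ * x j.succ) →
    ∀ i : Fin k, x i.castSucc * x i.succ = 0

/-- The cone column sufficient-`W` (cone cS-`W`) property. -/
def HasConeCSW {n k : ℕ} (C : Fin (k+1) → Matrix (Fin n) (Fin n) ℝ) : Prop :=
  ∀ x : Fin (k+1) → Fin n → ℝ,
    C 0 *ᵥ x 0 = ∑ i : Fin k, C i.succ *ᵥ x i.succ →
    (∀ i : Fin k, 0 ≤ x i.succ) →
    (∀ i : Fin k, x 0 * x i.succ ≤ 0) →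
    ∀ i : Fin k, x i.castSucc * x i.succ = 0

/-- `x = (x 0, ..., x k)` solves the extended horizontal linear complementarity
problem EHLCP(C, d, q). -/
def IsSolEHLCP {n k : ℕ} (C : Fin (k+1) → Matrix (Fin n) (Fin n) ℝ)
    (d : Fin (k-1) → Fin n → ℝ) (q : Fin n → ℝ)
    (x : Fin (k+1) → Fin n → ℝ) : Prop :=
  C 0 *ᵥ x 0 = q + ∑ i : Fin k, C i.succ *ᵥ x i.succ ∧
  x 0 ⊓ x 1 = 0 ∧
  ∀ j : Fin (k-1),
    (d j - x ⟨j.1 + 1, by have := j.2; omega⟩) ⊓ x ⟨j.1 + 2, by have := j.2; omega⟩ = 0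

/-- the column `W`-property implies the column ND-`W` property. -/
theorem columnW_implies_columnNDW {n k : ℕ} (C : Fin (k+1) → Matrix (Fin n) (Fin n) ℝ)
    (h : HasColumnW C) : HasColumnNDW C := by
  classical
  intro x heq hprod
  have hpair : ∀ i j : Fin (k+1), i ≠ j → ∀ r, x i r * x j r = 0 := by
    intro i j hij r
    rcases lt_or_gt_of_ne hij with hlt | hlt
    · exact congrFun (hprod i j hlt) r
    · simpa [mul_comm] using congrFun (hprod j i hlt) r
  let P : Fin n → Prop := fun j => ∃ i : Fin (k+1), i ≠ 0 ∧ x i j ≠ 0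
  have hPex : ∀ j, P j → ∃ i : Fin (k+1), i ≠ 0 ∧ x i j ≠ 0 := fun _ hj => hj
  let idx : Fin n → Fin (k+1) := fun j => if hj : P j then (hPex j hj).choose else 0
  let R : Matrix (Fin n) (Fin n) ℝ := Matrix.of fun r j => C (idx j) r j
  let y : Fin n → ℝ := fun j => if hj : P j then -(x (hPex j hj).choose j) else x 0 j
  have hrep : IsColRep C R := fun j => ⟨idx j, fun r => rfl⟩
  have hdet : R.det ≠ 0 := by
    rcases h with h | h
    · exact ne_of_gt (h R hrep)
    · exact ne_of_lt (h R hrep)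
  have hRy : R *ᵥ y = 0 := by
    funext r
    have hcol : ∀ j, R r j * y j
        = C 0 r j * x 0 j - ∑ i : Fin k, C i.succ r j * x i.succ j := by
      intro j
      by_cases hj : P j
      · obtain ⟨hi0, hx0⟩ := (hPex j hj).choose_spec
        set i0 := (hPex j hj).choose with hi0def
        have hx00 : x 0 j = 0 := by
          rcases mul_eq_zero.mp (hpair 0 i0 (Ne.symm hi0) j) with h' | h'
          · exact h'
          · exact absurd h' hx0
        have hsum : ∑ i : Fin k, C i.succ r j * x i.succ j = C i0 r j * x i0 j := by
          have hi0s : (i0.pred hi0).succ = i0 := Fin.succ_pred _ _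
          rw [Finset.sum_eq_single (i0.pred hi0)]
          · rw [hi0s]
          · intro b _ hb
            have hbne : b.succ ≠ i0 := by
              intro hc
              exact hb (by rw [← hi0s] at hc; exact Fin.succ_injective _ hc)
            rcases mul_eq_zero.mp (hpair b.succ i0 hbne j) with h' | h'
            · rw [h', mul_zero]
            · exact absurd h' hx0
          · intro hmem
            exact absurd (Finset.mem_univ _) hmem
        have hR : R r j = C i0 r j := by simp [R, idx, hj, hi0def]
        have hy : y j = -(x i0 j) := by simp [y, hj, hi0def]
        rw [hR, hy, hsum, hx00]
        ring
      · have hR : R r j = C 0 r j := by simp [R, idx, hj]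
        have hy : y j = x 0 j := by simp [y, hj]
        have hz : ∀ i : Fin k, x i.succ j = 0 := by
          intro i
          by_contra hc
          exact hj ⟨i.succ, Fin.succ_ne_zero i, hc⟩
        rw [hR, hy]
        simp [hz]
    have h1 : (R *ᵥ y) r = ∑ j, R r j * y j := rfl
    have h2 : (C 0 *ᵥ x 0) r = ∑ j, C 0 r j * x 0 j := rfl
    have h3 : (∑ i : Fin k, C i.succ *ᵥ x i.succ) r
        = ∑ j, ∑ i : Fin k, C i.succ r j * x i.succ j := by
      rw [Finset.sum_apply]
      rw [Finset.sum_comm]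
      rfl
    have := congrFun heq r
    rw [h2, h3] at this
    simp only [h1, Pi.zero_apply]
    calc ∑ j, R r j * y j
        = ∑ j, (C 0 r j * x 0 j - ∑ i : Fin k, C i.succ r j * x i.succ j) := by
          exact Finset.sum_congr rfl fun j _ => hcol j
      _ = (∑ j, C 0 r j * x 0 j) - ∑ j, ∑ i : Fin k, C i.succ r j * x i.succ j :=
          Finset.sum_sub_distrib _ _
      _ = 0 := by rw [← this]; ring
  have hy0 : y = 0 := Matrix.eq_zero_of_mulVec_eq_zero hdet hRy
  have hnotP : ∀ j, ¬ P j := by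
    intro j hj
    obtain ⟨hi0, hx0⟩ := (hPex j hj).choose_spec
    have : y j = -(x (hPex j hj).choose j) := by simp [y, hj]
    rw [hy0] at this
    exact hx0 (by simpa using this.symm)
  intro i
  funext j
  have hy : y j = x 0 j := by simp [y, hnotP j]
  rw [hy0] at hy
  by_cases hi : i = 0
  · rw [hi]; exact hy.symm
  · by_contra hc
    exact hnotP j ⟨i, hi, hc⟩
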